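/- Let u and v be adjacent vertices of a graph G such that N(v) \ {u} is a clique (u and v form a funnel). Then there exists a maximum independent set I of G with |I ∩ {u,v}| = 1, i.e., {u} and {v} are alternative sets. -/

import Mathlib

variable {V : Type*} [Fintype V] [DecidableEq V]

def IsIndep (G : SimpleGraph V) (I : Finset V) : Prop :=
  ∀ u ∈ I, ∀ v ∈ I, ¬ G.Adj u v

def IsMaxIndep (G : SimpleGraph V) (I : Finset V) : Prop :=
  IsIndep G I ∧ ∀ J : Finset V, IsIndep G J → J.card ≤ I.card

theorem funnel_alternative (G : SimpleGraph V) [DecidableRel G.Adj] (u v : V)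
    (huv : G.Adj u v)
    (hclique : ∀ a ∈ (G.neighborFinset v).erase u, ∀ b ∈ (G.neighborFinset v).erase u,
      a ≠ b → G.Adj a b) :
    ∃ I : Finset V, IsMaxIndep G I ∧ (I ∩ {u, v}).card = 1 := by
  classical
  obtain ⟨I, hI, hImax⟩ : ∃ I : Finset V, IsIndep G I ∧
      ∀ J : Finset V, IsIndep G J → J.card ≤ I.card := by
    obtain ⟨I, hIS, hmax⟩ := Finset.exists_max_image
      ((Finset.univ : Finset (Finset V)).filter (fun J => IsIndep G J)) Finset.card
      ⟨∅, Finset.mem_filter.mpr ⟨Finset.mem_univ _, by simp [IsIndep]⟩⟩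
    exact ⟨I, (Finset.mem_filter.mp hIS).2,
      fun J hJ => hmax J (Finset.mem_filter.mpr ⟨Finset.mem_univ _, hJ⟩)⟩
  have hne : u ≠ v := G.ne_of_adj huv
  by_cases hu : u ∈ I
  · have hv : v ∉ I := fun hv => hI u hu v hv huv
    refine ⟨I, ⟨hI, hImax⟩, ?_⟩
    have : I ∩ {u, v} = {u} := by
      ext a
      simp only [Finset.mem_inter, Finset.mem_insert, Finset.mem_singleton]
      constructor
      · rintro ⟨ha, rfl | rfl⟩
        · rfl
        · exact absurd ha hv
      · rintro rfl; exact ⟨hu, Or.inl rfl⟩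
    rw [this, Finset.card_singleton]
  · by_cases hv : v ∈ I
    · refine ⟨I, ⟨hI, hImax⟩, ?_⟩
      have : I ∩ {u, v} = {v} := by
        ext a
        simp only [Finset.mem_inter, Finset.mem_insert, Finset.mem_singleton]
        constructor
        · rintro ⟨ha, rfl | rfl⟩
          · exact absurd ha hu
          · rfl
        · rintro rfl; exact ⟨hv, Or.inr rfl⟩
      rw [this, Finset.card_singleton]
    · -- u ∉ I, v ∉ I
      obtain ⟨w, hwI, hvw⟩ : ∃ w ∈ I, G.Adj v w := by
        by_contra h
        push_neg at h
        have hind : IsIndep G (insert v I) := by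
          intro a ha b hb hab
          rcases Finset.mem_insert.mp ha with h1 | ha'
          · rcases Finset.mem_insert.mp hb with h2 | hb'
            · exact G.ne_of_adj hab (h1.trans h2.symm)
            · exact h b hb' (h1 ▸ hab)
          · rcases Finset.mem_insert.mp hb with h2 | hb'
            · exact h a ha' (h2 ▸ hab.symm)
            · exact hI a ha' b hb' hab
        have := hImax _ hind
        rw [Finset.card_insert_of_notMem hv] at this
        omega
      have hwu : w ≠ u := fun h => hu (h ▸ hwI)
      have hwmem : w ∈ (G.neighborFinset v).erase u :=
        Finset.mem_erase.mpr ⟨hwu, (G.mem_neighborFinset v w).mpr hvw⟩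
      have hvI' : v ∉ I.erase w := fun h => hv (Finset.mem_of_mem_erase h)
      have hind' : IsIndep G (insert v (I.erase w)) := by
        intro a ha b hb hab
        rcases Finset.mem_insert.mp ha with h1 | ha'
        · rcases Finset.mem_insert.mp hb with h2 | hb'
          · exact G.ne_of_adj hab (h1.trans h2.symm)
          · obtain ⟨hbw, hbI⟩ := Finset.mem_erase.mp hb'
            have hbu : b ≠ u := fun h => hu (h ▸ hbI)
            have hbmem : b ∈ (G.neighborFinset v).erase u :=
              Finset.mem_erase.mpr ⟨hbu, (G.mem_neighborFinset v b).mpr (h1 ▸ hab)⟩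
            exact hI b hbI w hwI (hclique b hbmem w hwmem hbw)
        · rcases Finset.mem_insert.mp hb with h2 | hb'
          · obtain ⟨haw, haI⟩ := Finset.mem_erase.mp ha'
            have hau : a ≠ u := fun h => hu (h ▸ haI)
            have hamem : a ∈ (G.neighborFinset v).erase u :=
              Finset.mem_erase.mpr ⟨hau, (G.mem_neighborFinset v a).mpr (h2 ▸ hab.symm)⟩
            exact hI a haI w hwI (hclique a hamem w hwmem haw)
          · exact hI a (Finset.mem_of_mem_erase ha') b (Finset.mem_of_mem_erase hb') hab
      have hcard : (insert v (I.erase w)).card = I.card := by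
        rw [Finset.card_insert_of_notMem hvI', Finset.card_erase_of_mem hwI]
        have : 0 < I.card := Finset.card_pos.mpr ⟨w, hwI⟩
        omega
      refine ⟨insert v (I.erase w), ⟨hind', fun J hJ => hcard ▸ hImax J hJ⟩, ?_⟩
      have huI' : u ∉ insert v (I.erase w) := by
        intro h
        rcases Finset.mem_insert.mp h with h1 | h1
        · exact hne h1
        · exact hu (Finset.mem_of_mem_erase h1)
      have : insert v (I.erase w) ∩ {u, v} = {v} := by
        ext a
        simp only [Finset.mem_inter, Finset.mem_insert, Finset.mem_singleton]
        constructor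
        · rintro ⟨ha, rfl | rfl⟩
          · exact absurd (Finset.mem_insert.mpr ha) huI'
          · rfl
        · rintro rfl; exact ⟨Or.inl rfl, Or.inr rfl⟩
      rw [this, Finset.card_singleton]
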